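/- arXiv:2011.07550 — 4 statements merged into one kernel-verified Lean document; each statement's English description precedes it below -/
import Mathlib

section
/- Let β, γ : ℝ → ℝ be continuous functions with β(z) → β∞ and γ(z) → γ∞ as z → ∞, where γ∞ > 0 and γ is bounded below by a positive constant. Let ρ : ℝ → ℝ be continuous, positive, T-periodic. Define R₀(L) = (∫₀ᵀ∫₀ᴸ β(ρ(t)y) dy dt) / (∫₀ᵀ∫₀ᴸ γ(ρ(t)y) dy dt). Then R₀(L) → β∞/γ∞ as L → ∞. -/
open MeasureTheory intervalIntegral Filter Topology

lemma avg_tendsto (T : ℝ) (hT : 0 < T) (ρ : ℝ → ℝ) (hρ : Continuous ρ)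
    (hρpos : ∀ t, 0 < ρ t) (f : ℝ → ℝ) (hf : Continuous f) (M : ℝ)
    (hfbd : ∀ z, |f z| ≤ M) (l : ℝ) (hfl : Tendsto f atTop (𝓝 l)) :
    Tendsto (fun L : ℝ => (∫ t in (0:ℝ)..T, ∫ y in (0:ℝ)..L, f (ρ t * y)) / (T * L))
      atTop (𝓝 l) := by
  -- minimum of ρ on [0,T]
  obtain ⟨t₀, ht₀mem, ht₀⟩ := isCompact_Icc.exists_isMinOn (Set.nonempty_Icc.2 hT.le)
    hρ.continuousOn
  set m := ρ t₀ with hm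
  have hmpos : 0 < m := hρpos t₀
  have hM : 0 ≤ M := (abs_nonneg _).trans (hfbd 0)
  rw [Metric.tendsto_atTop]
  intro ε hε
  obtain ⟨Z, hZ⟩ := Metric.tendsto_atTop.mp hfl (ε / 2) (by positivity)
  set Y : ℝ := max (Z / m) 0 with hY
  have hY0 : 0 ≤ Y := le_max_right _ _
  refine ⟨max (Y + 1) (2 * Y * (M + |l|) / ε + 1), fun L hL => ?_⟩
  have hLY : Y < L := lt_of_lt_of_le (by linarith) (le_trans (le_max_left _ _) hL)
  have hL0 : 0 < L := lt_of_le_of_lt hY0 hLY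
  have hL2 : 2 * Y * (M + |l|) / ε < L :=
    lt_of_lt_of_le (by linarith) (le_trans (le_max_right _ _) hL)
  -- continuity of inner integral as a function of t
  have hint : ∀ (a b : ℝ), IntervalIntegrable f volume a b := fun a b =>
    hf.intervalIntegrable a b
  have hFcont : Continuous fun t => ∫ y in (0:ℝ)..L, f (ρ t * y) := by
    have : ∀ t, (∫ y in (0:ℝ)..L, f (ρ t * y))
        = (ρ t)⁻¹ • ∫ z in (0:ℝ)..(ρ t * L), f z := by
      intro t
      rw [integral_comp_mul_left f (ne_of_gt (hρpos t)), mul_zero]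
    simp only [this]
    exact ((hρ.inv₀ (fun t => (hρpos t).ne')).smul
      ((continuous_primitive hint 0).comp (hρ.mul continuous_const)))
  -- key pointwise estimate
  have key : ∀ t ∈ Set.uIoc (0:ℝ) T,
      ‖(∫ y in (0:ℝ)..L, f (ρ t * y)) - L * l‖ ≤ Y * (M + |l|) + L * (ε / 2) := by
    intro t ht
    have htm : m ≤ ρ t := by
      have : t ∈ Set.Icc (0:ℝ) T := by
        rw [Set.uIoc_of_le hT.le] at ht
        exact ⟨ht.1.le, ht.2⟩
      exact ht₀ this
    have h1 : (∫ y in (0:ℝ)..L, f (ρ t * y)) - L * l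
        = (∫ y in (0:ℝ)..Y, (f (ρ t * y) - l)) + ∫ y in Y..L, (f (ρ t * y) - l) := by
      have hic : ∀ a b : ℝ, IntervalIntegrable (fun y => f (ρ t * y) - l) volume a b :=
        fun a b => Continuous.intervalIntegrable (by fun_prop) a b
      have hic2 : IntervalIntegrable (fun y => f (ρ t * y)) volume 0 L :=
        Continuous.intervalIntegrable (by fun_prop) 0 L
      rw [integral_add_adjacent_intervals (hic 0 Y) (hic Y L),
        integral_sub hic2 intervalIntegrable_const,
        intervalIntegral.integral_const, sub_zero, smul_eq_mul]
    rw [h1]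
    have h2 : ‖∫ y in (0:ℝ)..Y, (f (ρ t * y) - l)‖ ≤ (M + |l|) * |Y - 0| := by
      apply intervalIntegral.norm_integral_le_of_norm_le_const
      intro y hy
      calc ‖f (ρ t * y) - l‖ ≤ |f (ρ t * y)| + |l| := norm_sub_le _ _
        _ ≤ M + |l| := by gcongr; exact hfbd _
    have h3 : ‖∫ y in Y..L, (f (ρ t * y) - l)‖ ≤ (ε / 2) * |L - Y| := by
      apply intervalIntegral.norm_integral_le_of_norm_le_const
      intro y hy
      rw [Set.uIoc_of_le hLY.le] at hy
      have hyY : Y ≤ y := hy.1.le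
      have hZy : Z ≤ ρ t * y := by
        have h4 : Z / m ≤ Y := le_max_left _ _
        have h5 : Z ≤ m * Y := by
          rw [div_le_iff₀ hmpos] at h4; linarith [h4]
        calc Z ≤ m * Y := h5
          _ ≤ ρ t * y := by
              apply mul_le_mul htm hyY hY0 (le_trans hmpos.le htm)
      have := hZ (ρ t * y) hZy
      rw [Real.dist_eq] at this
      exact this.le
    calc ‖(∫ y in (0:ℝ)..Y, (f (ρ t * y) - l)) + ∫ y in Y..L, (f (ρ t * y) - l)‖
        ≤ ‖∫ y in (0:ℝ)..Y, (f (ρ t * y) - l)‖ + ‖∫ y in Y..L, (f (ρ t * y) - l)‖ :=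
          norm_add_le _ _
      _ ≤ (M + |l|) * |Y - 0| + (ε / 2) * |L - Y| := add_le_add h2 h3
      _ ≤ Y * (M + |l|) + L * (ε / 2) := by
          rw [sub_zero, abs_of_nonneg hY0, abs_of_nonneg (by linarith : (0:ℝ) ≤ L - Y)]
          nlinarith [hε.le]
  -- outer estimate
  have houter : ‖(∫ t in (0:ℝ)..T, ∫ y in (0:ℝ)..L, f (ρ t * y)) - T * (L * l)‖
      ≤ (Y * (M + |l|) + L * (ε / 2)) * |T - 0| := by
    have h6 : (∫ t in (0:ℝ)..T, ∫ y in (0:ℝ)..L, f (ρ t * y)) - T * (L * l)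
        = ∫ t in (0:ℝ)..T, ((∫ y in (0:ℝ)..L, f (ρ t * y)) - L * l) := by
      rw [integral_sub (hFcont.intervalIntegrable 0 T) intervalIntegrable_const,
        intervalIntegral.integral_const, sub_zero, smul_eq_mul]
    rw [h6]
    exact intervalIntegral.norm_integral_le_of_norm_le_const key
  rw [Real.dist_eq]
  have hTL : 0 < T * L := mul_pos hT hL0
  have heq : (∫ t in (0:ℝ)..T, ∫ y in (0:ℝ)..L, f (ρ t * y)) / (T * L) - l
      = ((∫ t in (0:ℝ)..T, ∫ y in (0:ℝ)..L, f (ρ t * y)) - T * (L * l)) / (T * L) := by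
    field_simp
  rw [heq, abs_div, abs_of_pos hTL]
  rw [div_lt_iff₀ hTL]
  rw [Real.norm_eq_abs] at houter
  rw [sub_zero, abs_of_pos hT] at houter
  calc |(∫ t in (0:ℝ)..T, ∫ y in (0:ℝ)..L, f (ρ t * y)) - T * (L * l)|
      ≤ (Y * (M + |l|) + L * (ε / 2)) * T := houter
    _ < ε * (T * L) := by
        have hL3 : 2 * Y * (M + |l|) < L * ε := by
          rwa [div_lt_iff₀ hε] at hL2
        nlinarith [mul_lt_mul_of_pos_left hL3 hT]

theorem stmt_4 (T c βinf γinf : ℝ) (hT : 0 < T) (hc : 0 < c) (hγinf : 0 < γinf)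
    (ρ β γ : ℝ → ℝ)
    (hρ : Continuous ρ) (hρpos : ∀ t, 0 < ρ t) (hρper : ∀ t, ρ (t + T) = ρ t)
    (hβ : Continuous β) (hγ : Continuous γ)
    (hβbd : ∃ M, ∀ z, |β z| ≤ M) (hγbd : ∃ M, ∀ z, |γ z| ≤ M)
    (hγlb : ∀ z, c ≤ γ z)
    (hβlim : Tendsto β atTop (𝓝 βinf)) (hγlim : Tendsto γ atTop (𝓝 γinf)) :
    Tendsto (fun L : ℝ =>
        (∫ t in (0:ℝ)..T, ∫ y in (0:ℝ)..L, β (ρ t * y)) /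
        (∫ t in (0:ℝ)..T, ∫ y in (0:ℝ)..L, γ (ρ t * y)))
      atTop (𝓝 (βinf / γinf)) := by
  obtain ⟨Mβ, hMβ⟩ := hβbd
  obtain ⟨Mγ, hMγ⟩ := hγbd
  have h1 := avg_tendsto T hT ρ hρ hρpos β hβ Mβ hMβ βinf hβlim
  have h2 := avg_tendsto T hT ρ hρ hρpos γ hγ Mγ hMγ γinf hγlim
  have h3 := h1.div h2 hγinf.ne'
  refine h3.congr' ?_
  filter_upwards [eventually_gt_atTop (0:ℝ)] with L hL
  exact div_div_div_cancel_right₀ (ne_of_gt (mul_pos hT hL)) _ _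
end

section
/- Suppose β, γ, r : ℝ → ℝ are continuous T-periodic, β > 0, and Φ is a positive C¹ T-periodic solution of Φ' = (β/R₀ − γ − r)Φ with R₀ > 1. Set δ = (1/4)(1 − 1/R₀) and let 0 < λ₀ ≤ (3/4)(1 − 1/R₀)·β(t) for all t. Then I(t) = η e^{λ₀ t} Φ(t) (for any η > 0) satisfies I'(t) ≤ (β(t)(1 − δ) − γ(t) − r(t))·I(t), and I(t) → ∞ as t → ∞ if inf Φ > 0. -/
open MeasureTheory intervalIntegral Filter Topology

theorem stmt_11 (T R₀ lam₀ η : ℝ) (hT : 0 < T) (hR₀ : 1 < R₀) (hη : 0 < η)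
    (β γ r Φ : ℝ → ℝ)
    (hβ : Continuous β) (hγ : Continuous γ) (hr : Continuous r)
    (hβper : ∀ t, β (t + T) = β t) (hγper : ∀ t, γ (t + T) = γ t)
    (hrper : ∀ t, r (t + T) = r t) (hβpos : ∀ t, 0 < β t)
    (hrmean : (∫ t in (0:ℝ)..T, r t) = 0)
    (hΦ : ContDiff ℝ 1 Φ) (hΦpos : ∀ t, 0 < Φ t) (hΦper : ∀ t, Φ (t + T) = Φ t)
    (hode : ∀ t, deriv Φ t = (β t / R₀ - γ t - r t) * Φ t)
    (hlam₀ : 0 < lam₀) (hlam₀le : ∀ t, lam₀ ≤ 3 / 4 * (1 - 1 / R₀) * β t) :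
    (∀ t, deriv (fun s => η * Real.exp (lam₀ * s) * Φ s) t ≤
      (β t * (1 - 1 / 4 * (1 - 1 / R₀)) - γ t - r t) *
        (η * Real.exp (lam₀ * t) * Φ t)) ∧
    ((∃ c > (0:ℝ), ∀ t, c ≤ Φ t) →
      Tendsto (fun t => η * Real.exp (lam₀ * t) * Φ t) atTop atTop) := by
  constructor
  · intro t
    have hΦd : HasDerivAt Φ (deriv Φ t) t :=
      ((hΦ.differentiable one_ne_zero) t).hasDerivAt
    have he : HasDerivAt (fun s => Real.exp (lam₀ * s))
        (lam₀ * Real.exp (lam₀ * t)) t := by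
      have := (Real.hasDerivAt_exp (lam₀ * t)).comp t
        ((hasDerivAt_id t).const_mul lam₀)
      simp only [Function.comp_def, mul_one] at this
      simpa [mul_comm] using this
    have hI : HasDerivAt (fun s => η * Real.exp (lam₀ * s) * Φ s)
        (η * ((lam₀ * Real.exp (lam₀ * t)) * Φ t
          + Real.exp (lam₀ * t) * deriv Φ t)) t := by
      have := ((he.const_mul η).mul hΦd)
      exact this.congr_deriv (by ring)
    rw [hI.deriv, hode t]
    have hE : 0 < Real.exp (lam₀ * t) := Real.exp_pos _
    have hP := hΦpos t
    have hb := hlam₀le t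
    have hkey : lam₀ + β t / R₀ ≤ β t * (1 - 1 / 4 * (1 - 1 / R₀)) := by
      have : 3 / 4 * (1 - 1 / R₀) * β t = β t * (1 - 1 / 4 * (1 - 1 / R₀)) - β t / R₀ := by
        ring
      linarith [hb, this ▸ hb]
    nlinarith [mul_pos (mul_pos hη hE) hP,
      mul_le_mul_of_nonneg_right hkey (le_of_lt (mul_pos (mul_pos hη hE) hP))]
  · rintro ⟨c, hc, hcle⟩
    have h1 : Tendsto (fun t => Real.exp (lam₀ * t)) atTop atTop :=
      Real.tendsto_exp_atTop.comp (tendsto_id.const_mul_atTop hlam₀)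
    have h2 : Tendsto (fun t => η * c * Real.exp (lam₀ * t)) atTop atTop :=
      h1.const_mul_atTop (mul_pos hη hc)
    refine tendsto_atTop_mono (fun t => ?_) h2
    have hE : 0 < Real.exp (lam₀ * t) := Real.exp_pos _
    have := mul_le_mul_of_nonneg_left (hcle t) (le_of_lt (mul_pos hη hE))
    nlinarith
end

section
/- Let u, v : ℝ → ℝ be positive C¹ T-periodic solutions of the logistic-type periodic ODE x'(t) = a(t)x(t) − b(t)x(t)², where a, b are continuous T-periodic with b(t) > 0 for all t. Then u = v; i.e., the positive T-periodic solution is unique. -/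
open MeasureTheory

theorem stmt_12 (T : ℝ) (hT : 0 < T) (a b u v : ℝ → ℝ)
    (ha : Continuous a) (hb : Continuous b)
    (haper : ∀ t, a (t + T) = a t) (hbper : ∀ t, b (t + T) = b t)
    (hbpos : ∀ t, 0 < b t)
    (hu : ContDiff ℝ 1 u) (hupos : ∀ t, 0 < u t) (huper : ∀ t, u (t + T) = u t)
    (huode : ∀ t, deriv u t = a t * u t - b t * u t ^ 2)
    (hv : ContDiff ℝ 1 v) (hvpos : ∀ t, 0 < v t) (hvper : ∀ t, v (t + T) = v t)
    (hvode : ∀ t, deriv v t = a t * v t - b t * v t ^ 2) :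
    u = v := by
  set A : ℝ → ℝ := fun t => ∫ s in (0:ℝ)..t, a s with hAdef
  have hAderiv : ∀ t, HasDerivAt A (a t) t := fun t =>
    intervalIntegral.integral_hasDerivAt_right (ha.intervalIntegrable 0 t)
      (ha.stronglyMeasurableAtFilter _ _) ha.continuousAt
  have hu' : ∀ t, HasDerivAt u (a t * u t - b t * u t ^ 2) t := fun t => by
    have h := (hu.differentiable one_ne_zero t).hasDerivAt
    rwa [huode t] at h
  have hv' : ∀ t, HasDerivAt v (a t * v t - b t * v t ^ 2) t := fun t => by
    have h := (hv.differentiable one_ne_zero t).hasDerivAt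
    rwa [hvode t] at h
  set d : ℝ → ℝ := fun t => (u t)⁻¹ - (v t)⁻¹ with hddef
  have hd' : ∀ t, HasDerivAt d (-(a t) * d t) t := fun t => by
    have h := ((hu' t).inv (hupos t).ne').sub ((hv' t).inv (hvpos t).ne')
    refine HasDerivAt.congr_deriv (f := d) h ?_
    simp only [hddef]
    field_simp [(hupos t).ne', (hvpos t).ne']
    ring
  set g : ℝ → ℝ := fun t => Real.exp (A t) * d t with hgdef
  have hg' : ∀ t, HasDerivAt g 0 t := fun t => by
    have h := ((hAderiv t).exp).mul (hd' t)
    refine HasDerivAt.congr_deriv (f := g) h ?_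
    ring
  have hA0 : A 0 = 0 := intervalIntegral.integral_same
  have hgconst : ∀ t, g t = d 0 := fun t => by
    have h := is_const_of_deriv_eq_zero (f := g)
      (fun x => (hg' x).differentiableAt) (fun x => (hg' x).deriv) t 0
    simpa [hgdef, hA0] using h
  -- FTC for log u
  have hlog : ∀ t, HasDerivAt (fun s => Real.log (u s)) (a t - b t * u t) t := fun t => by
    have h := (Real.hasDerivAt_log (hupos t).ne').comp t (hu' t)
    refine HasDerivAt.congr_deriv h ?_
    field_simp [(hupos t).ne']
  have hiint : IntervalIntegrable (fun s => a s - b s * u s) volume 0 T :=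
    (ha.sub (hb.mul (hu.continuous))).intervalIntegrable 0 T
  have hftc : ∫ s in (0:ℝ)..T, (a s - b s * u s) =
      Real.log (u T) - Real.log (u 0) :=
    intervalIntegral.integral_eq_sub_of_hasDerivAt (fun t _ => hlog t) hiint
  have huT : u T = u 0 := by simpa using huper 0
  have hvT : v T = v 0 := by simpa using hvper 0
  have hsplit : ∫ s in (0:ℝ)..T, (a s - b s * u s) =
      (∫ s in (0:ℝ)..T, a s) - ∫ s in (0:ℝ)..T, b s * u s :=
    intervalIntegral.integral_sub (ha.intervalIntegrable 0 T)
      ((hb.mul hu.continuous).intervalIntegrable 0 T)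
  have hbu_pos : 0 < ∫ s in (0:ℝ)..T, b s * u s :=
    intervalIntegral.intervalIntegral_pos_of_pos_on
      ((hb.mul hu.continuous).intervalIntegrable 0 T)
      (fun x _ => mul_pos (hbpos x) (hupos x)) hT
  have hAT : 0 < A T := by
    have : (0:ℝ) = (∫ s in (0:ℝ)..T, a s) - ∫ s in (0:ℝ)..T, b s * u s := by
      rw [← hsplit, hftc, huT]; ring
    simp only [hAdef]
    linarith
  have hdT : d T = d 0 := by simp only [hddef, huT, hvT]
  have hd0 : d 0 = 0 := by
    have h1 : Real.exp (A T) * d T = d 0 := hgconst T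
    rw [hdT] at h1
    have h2 : (Real.exp (A T) - 1) * d 0 = 0 := by linarith
    rcases mul_eq_zero.mp h2 with h | h
    · exfalso
      have hlt : Real.exp 0 < Real.exp (A T) := Real.exp_lt_exp.mpr hAT
      rw [Real.exp_zero] at hlt
      linarith
    · exact h
  funext t
  have h1 : Real.exp (A t) * d t = 0 := by
    have := hgconst t
    rw [hd0] at this
    simpa [hgdef] using this
  have h2 : d t = 0 := by
    have := (Real.exp_pos (A t)).ne'
    exact (mul_eq_zero.mp h1).resolve_left this
  have h3 : (u t)⁻¹ = (v t)⁻¹ := by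
    simp only [hddef] at h2; linarith
  exact inv_injective h3
end

section
/- Suppose R₀ > 0 and Φ > 0 is a C¹ T-periodic solution of Φ'(t) + (γ(t) + r(t))Φ(t) = (β(t)/R₀)Φ(t) with β, γ, r continuous T-periodic, ∫₀ᵀ r = 0, γ > 0, β > 0. Then R₀ = (∫₀ᵀ β(t) dt)/(∫₀ᵀ γ(t) dt). -/
open MeasureTheory intervalIntegral

theorem stmt_17 (T R₀ : ℝ) (hT : 0 < T) (hR₀ : 0 < R₀) (β γ r Φ : ℝ → ℝ)
    (hβ : Continuous β) (hγ : Continuous γ) (hr : Continuous r)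
    (hβper : ∀ t, β (t + T) = β t) (hγper : ∀ t, γ (t + T) = γ t)
    (hrper : ∀ t, r (t + T) = r t)
    (hβpos : ∀ t, 0 < β t) (hγpos : ∀ t, 0 < γ t)
    (hrmean : (∫ t in (0:ℝ)..T, r t) = 0)
    (hΦ : ContDiff ℝ 1 Φ) (hΦpos : ∀ t, 0 < Φ t) (hΦper : ∀ t, Φ (t + T) = Φ t)
    (hode : ∀ t, deriv Φ t + (γ t + r t) * Φ t = β t / R₀ * Φ t) :
    R₀ = (∫ t in (0:ℝ)..T, β t) / (∫ t in (0:ℝ)..T, γ t) := by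
  have hΦd : Differentiable ℝ Φ := hΦ.differentiable one_ne_zero
  have hlog : ∀ t, HasDerivAt (fun s => Real.log (Φ s)) (deriv Φ t / Φ t) t := by
    intro t
    exact ((hΦd t).hasDerivAt).log (hΦpos t).ne'
  have hcontderiv : Continuous (deriv Φ) := (hΦ.continuous_deriv le_rfl)
  have hΦc : Continuous Φ := hΦd.continuous
  have hquot : ∀ t, deriv Φ t / Φ t = β t / R₀ - γ t - r t := by
    intro t
    have h := hode t
    have hΦt := (hΦpos t).ne'
    field_simp at h ⊢
    linarith [h]
  have hint : (∫ t in (0:ℝ)..T, deriv Φ t / Φ t) =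
      Real.log (Φ T) - Real.log (Φ 0) := by
    apply intervalIntegral.integral_deriv_eq_sub' _ (funext fun t => (hlog t).deriv)
      (fun t _ => (hlog t).differentiableAt)
    exact (hcontderiv.div hΦc (fun t => (hΦpos t).ne')).continuousOn
  have hΦT : Φ T = Φ 0 := by simpa using hΦper 0
  have hzero : (∫ t in (0:ℝ)..T, (β t / R₀ - γ t - r t)) = 0 := by
    rw [show (∫ t in (0:ℝ)..T, (β t / R₀ - γ t - r t)) = ∫ t in (0:ℝ)..T, deriv Φ t / Φ t from
      intervalIntegral.integral_congr fun t _ => (hquot t).symm, hint, hΦT, sub_self]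
  have hib : IntervalIntegrable β volume 0 T := hβ.intervalIntegrable _ _
  have hig : IntervalIntegrable γ volume 0 T := hγ.intervalIntegrable _ _
  have hir : IntervalIntegrable r volume 0 T := hr.intervalIntegrable _ _
  have hsplit : (∫ t in (0:ℝ)..T, (β t / R₀ - γ t - r t)) =
      (∫ t in (0:ℝ)..T, β t) / R₀ - (∫ t in (0:ℝ)..T, γ t) - (∫ t in (0:ℝ)..T, r t) := by
    rw [intervalIntegral.integral_sub ((hib.div_const R₀).sub hig) hir,
        intervalIntegral.integral_sub (hib.div_const R₀) hig,
        intervalIntegral.integral_div]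
  rw [hsplit, hrmean, sub_zero, sub_eq_zero] at hzero
  have hγpos' : 0 < ∫ t in (0:ℝ)..T, γ t :=
    intervalIntegral.intervalIntegral_pos_of_pos hig hγpos hT
  field_simp at hzero ⊢
  linarith [hzero]
end
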